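/- Let 0<q<1. The function g(x) = log Γ_q(x) - x·ψ_q(x) is strictly decreasing on (0,∞) and has a unique zero, which lies in the interval (1,2). -/

import Mathlib

open Real

/-- The q-digamma function: ψ_q(x) = -log(1-q) + (log q)·∑_{n=1}^∞ q^{nx}/(1-q^n). -/
noncomputable def qDigamma (q x : ℝ) : ℝ :=
  -Real.log (1 - q) + Real.log q * ∑' n : ℕ, q ^ (((n : ℝ) + 1) * x) / (1 - q ^ (n + 1))

/-- The q-gamma function: Γ_q(x) = (q;q)_∞/(q^x;q)_∞ · (1-q)^{1-x}. -/
noncomputable def qGamma (q x : ℝ) : ℝ :=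
  ((∏' i : ℕ, (1 - q ^ (i + 1))) / ∏' i : ℕ, (1 - q ^ (x + (i : ℝ)))) * (1 - q) ^ (1 - x)

/-- The q-bracket: [x]_q = (1-q^x)/(1-q). -/
noncomputable def qBracket (q x : ℝ) : ℝ := (1 - q ^ x) / (1 - q)

namespace QGaux

/-- terms of the series for `log (q^x;q)_∞` (negated). -/
noncomputable def A (q x : ℝ) (m : ℕ) : ℝ :=
  q ^ (((m : ℝ) + 1) * x) / (((m : ℝ) + 1) * (1 - q ^ (m + 1)))

/-- terms of the series in the q-digamma function. -/
noncomputable def B (q x : ℝ) (m : ℕ) : ℝ :=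
  q ^ (((m : ℝ) + 1) * x) / (1 - q ^ (m + 1))

/-- terms of the series for `g(x) - const`. -/
noncomputable def Fm (q x : ℝ) (m : ℕ) : ℝ :=
  q ^ (((m : ℝ) + 1) * x) * (1 / ((m : ℝ) + 1) - x * Real.log q) / (1 - q ^ (m + 1))

/-- double-series terms. -/
noncomputable def F2 (q x : ℝ) (p : ℕ × ℕ) : ℝ :=
  (q ^ (x + (p.1 : ℝ))) ^ (p.2 + 1) / ((p.2 : ℝ) + 1)

variable {q : ℝ}

section
variable (hq0 : 0 < q) (hq1 : q < 1)
include hq0 hq1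

lemma one_sub_pow_pos (m : ℕ) : 0 < 1 - q ^ (m + 1) :=
  sub_pos.2 (pow_lt_one₀ hq0.le hq1 m.succ_ne_zero)

lemma pow_le_q (m : ℕ) : q ^ (m + 1) ≤ q := by
  calc q ^ (m + 1) ≤ q ^ 1 := pow_le_pow_of_le_one hq0.le hq1.le (by omega)
  _ = q := pow_one q

lemma rpow_lt_one' {y : ℝ} (hy : 0 < y) : q ^ y < 1 := Real.rpow_lt_one hq0.le hq1 hy

omit hq1 in
lemma q_rpow_mul (x : ℝ) (m : ℕ) : q ^ (((m : ℝ) + 1) * x) = (q ^ x) ^ (m + 1) := by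
  rw [mul_comm, Real.rpow_mul hq0.le, show ((m : ℝ) + 1) = ((m + 1 : ℕ) : ℝ) by push_cast; ring,
    Real.rpow_natCast]

omit hq0 hq1 in
lemma summable_shift (r C : ℝ) (h0 : 0 ≤ r) (h1 : r < 1) :
    Summable fun m : ℕ => r ^ (m + 1) * C :=
  ((summable_geometric_of_lt_one h0 h1).mul_right (r * C)).congr fun m => by ring

lemma A_nonneg (x : ℝ) (m : ℕ) : 0 ≤ A q x m := by
  have h1 := one_sub_pow_pos hq0 hq1 m
  have : (0:ℝ) < (m : ℝ) + 1 := by positivity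
  exact div_nonneg (Real.rpow_pos_of_pos hq0 _).le (by positivity)

lemma summable_A {x : ℝ} (hx : 0 < x) : Summable (A q x) := by
  refine Summable.of_nonneg_of_le (A_nonneg hq0 hq1 x)
    (fun m => ?_) (summable_shift (q ^ x) (1 / (1 - q)) (Real.rpow_pos_of_pos hq0 x).le
      (rpow_lt_one' hq0 hq1 hx))
  have h1 := one_sub_pow_pos hq0 hq1 m
  have hq' : 0 < 1 - q := by linarith
  have hK : (1:ℝ) ≤ (m : ℝ) + 1 := by linarith [Nat.cast_nonneg (α := ℝ) m]
  have hden : 1 - q ≤ ((m : ℝ) + 1) * (1 - q ^ (m + 1)) := by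
    have h2 : 1 - q ≤ 1 - q ^ (m + 1) := by linarith [pow_le_q hq0 hq1 m]
    nlinarith
  rw [A, q_rpow_mul hq0 x m, mul_one_div]
  exact div_le_div_of_nonneg_left (by positivity) hq' hden

lemma summable_B {x : ℝ} (hx : 0 < x) : Summable (B q x) := by
  refine Summable.of_nonneg_of_le (fun m => ?_)
    (fun m => ?_) (summable_shift (q ^ x) (1 / (1 - q)) (Real.rpow_pos_of_pos hq0 x).le
      (rpow_lt_one' hq0 hq1 hx))
  · exact div_nonneg (Real.rpow_pos_of_pos hq0 _).le (one_sub_pow_pos hq0 hq1 m).le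
  · have h1 := one_sub_pow_pos hq0 hq1 m
    have hq' : 0 < 1 - q := by linarith
    have h2 : 1 - q ≤ 1 - q ^ (m + 1) := by linarith [pow_le_q hq0 hq1 m]
    rw [B, q_rpow_mul hq0 x m, mul_one_div]
    exact div_le_div_of_nonneg_left (by positivity) hq' h2

lemma Fm_nonneg {x : ℝ} (hx : 0 < x) (m : ℕ) : 0 ≤ Fm q x m := by
  have hL : Real.log q < 0 := Real.log_neg hq0 hq1
  have h1 := one_sub_pow_pos hq0 hq1 m
  have hK : (0:ℝ) < (m : ℝ) + 1 := by positivity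
  have : 0 < 1 / ((m : ℝ) + 1) - x * Real.log q := by
    have : 0 < 1 / ((m : ℝ) + 1) := by positivity
    nlinarith
  have h2 := Real.rpow_pos_of_pos hq0 (((m : ℝ) + 1) * x)
  exact div_nonneg (mul_nonneg h2.le this.le) h1.le

lemma summable_Fm {x : ℝ} (hx : 0 < x) : Summable (Fm q x) := by
  refine Summable.of_nonneg_of_le (Fm_nonneg hq0 hq1 hx)
    (fun m => ?_) (summable_shift (q ^ x) ((1 - x * Real.log q) / (1 - q))
      (Real.rpow_pos_of_pos hq0 x).le (rpow_lt_one' hq0 hq1 hx))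
  have hL : Real.log q < 0 := Real.log_neg hq0 hq1
  have h1 := one_sub_pow_pos hq0 hq1 m
  have hq' : 0 < 1 - q := by linarith
  have h2 : 1 - q ≤ 1 - q ^ (m + 1) := by linarith [pow_le_q hq0 hq1 m]
  have hK : (1:ℝ) ≤ (m : ℝ) + 1 := by linarith [Nat.cast_nonneg (α := ℝ) m]
  have hfac : 1 / ((m : ℝ) + 1) - x * Real.log q ≤ 1 - x * Real.log q := by
    have : 1 / ((m : ℝ) + 1) ≤ 1 := by
      rw [div_le_one (by linarith)]; linarith
    linarith
  have hfn : 0 ≤ 1 / ((m : ℝ) + 1) - x * Real.log q := by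
    have : 0 < 1 / ((m : ℝ) + 1) := by positivity
    nlinarith
  rw [Fm, q_rpow_mul hq0 x m, mul_div_assoc]
  exact mul_le_mul_of_nonneg_left (div_le_div₀ (by nlinarith) hfac hq' h2) (by positivity)

lemma Fm_eq (x : ℝ) (m : ℕ) :
    Fm q x m = A q x m - (x * Real.log q) * B q x m := by
  have h1 := (one_sub_pow_pos hq0 hq1 m).ne'
  have hK : ((m : ℝ) + 1) ≠ 0 := by positivity
  rw [Fm, A, B]
  field_simp

end

section
variable (hq0 : 0 < q) (hq1 : q < 1)
include hq0 hq1

lemma hasSum_log {x : ℝ} (hx : 0 < x) :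
    HasSum (fun i : ℕ => Real.log (1 - q ^ (x + (i : ℝ)))) (-∑' m, A q x m) := by
  have hq' : 0 < 1 - q := by linarith
  have hqxi : ∀ i : ℕ, 0 < q ^ (x + (i : ℝ)) ∧ q ^ (x + (i : ℝ)) < 1 := fun i =>
    ⟨Real.rpow_pos_of_pos hq0 _, rpow_lt_one' hq0 hq1 (by positivity)⟩
  have hrow : ∀ i : ℕ, HasSum (fun m => F2 q x (i, m)) (-Real.log (1 - q ^ (x + (i : ℝ)))) := by
    intro i
    have h := Real.hasSum_pow_div_log_of_abs_lt_one
      (x := q ^ (x + (i : ℝ))) (by rw [abs_of_pos (hqxi i).1]; exact (hqxi i).2)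
    exact h.congr_fun fun m => by simp only [F2]
  have hF2nonneg : ∀ p : ℕ × ℕ, 0 ≤ F2 q x p := by
    intro p
    rw [F2]
    have := (hqxi p.1).1
    positivity
  have hsumF2 : Summable (F2 q x) := by
    have hs2 : Summable fun m : ℕ => (q ^ x) ^ (m + 1) :=
      (summable_shift (q ^ x) 1 (Real.rpow_pos_of_pos hq0 x).le
        (rpow_lt_one' hq0 hq1 hx)).congr fun m => by ring
    have hgeom : Summable fun p : ℕ × ℕ => q ^ p.1 * (q ^ x) ^ (p.2 + 1) :=
      Summable.mul_of_nonneg (f := fun i : ℕ => q ^ i) (g := fun m : ℕ => (q ^ x) ^ (m + 1))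
        (summable_geometric_of_lt_one hq0.le hq1) hs2
        (fun i => by positivity) (fun m => by positivity)
    refine Summable.of_nonneg_of_le hF2nonneg (fun p => ?_) hgeom
    obtain ⟨i, m⟩ := p
    have e1 : q ^ (x + (i : ℝ)) = q ^ x * q ^ (i : ℝ) := Real.rpow_add hq0 _ _
    have e2 : (q ^ ((i : ℝ))) = q ^ i := Real.rpow_natCast q i
    have h3 : ((q : ℝ) ^ i) ^ (m + 1) ≤ q ^ i :=
      pow_le_of_le_one (by positivity) (pow_le_one₀ hq0.le hq1.le) m.succ_ne_zero
    have hp : (0:ℝ) ≤ (q ^ x) ^ (m + 1) := by positivity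
    have h4 : (q ^ (x + (i : ℝ))) ^ (m + 1) ≤ q ^ i * (q ^ x) ^ (m + 1) := by
      rw [e1, mul_pow, e2]
      calc (q ^ x) ^ (m+1) * (q ^ i) ^ (m+1) ≤ (q ^ x) ^ (m+1) * q ^ i :=
            mul_le_mul_of_nonneg_left h3 hp
        _ = q ^ i * (q ^ x) ^ (m + 1) := by ring
    refine le_trans ?_ h4
    rw [F2]
    exact div_le_self (by positivity) (by linarith [Nat.cast_nonneg (α := ℝ) m])
  have hcol : ∀ m : ℕ, HasSum (fun i => F2 q x (i, m)) (A q x m) := by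
    intro m
    have hg : HasSum (fun i : ℕ => (q ^ (m + 1)) ^ i) (1 - q ^ (m + 1))⁻¹ :=
      hasSum_geometric_of_lt_one (by positivity) (pow_lt_one₀ hq0.le hq1 m.succ_ne_zero)
    have h := hg.mul_right (q ^ (((m : ℝ) + 1) * x) / ((m : ℝ) + 1))
    have heq : ∀ i : ℕ, F2 q x (i, m)
        = (q ^ (m + 1)) ^ i * (q ^ (((m : ℝ) + 1) * x) / ((m : ℝ) + 1)) := by
      intro i
      have e1 : ((q : ℝ) ^ (m + 1)) ^ i = q ^ (((m + 1 : ℕ) : ℝ) * (i : ℝ)) := by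
        rw [Real.rpow_mul hq0.le, Real.rpow_natCast, Real.rpow_natCast]
      have e2 : (q ^ (x + (i : ℝ))) ^ (m + 1) = q ^ ((x + (i : ℝ)) * ((m + 1 : ℕ) : ℝ)) := by
        rw [Real.rpow_mul hq0.le, Real.rpow_natCast]
      rw [F2]
      simp only
      rw [e1, e2, show (x + (i : ℝ)) * ((m + 1 : ℕ) : ℝ)
          = ((m + 1 : ℕ) : ℝ) * (i : ℝ) + ((m : ℝ) + 1) * x by push_cast; ring,
        Real.rpow_add hq0]
      push_cast
      ring
    have hval : (1 - q ^ (m + 1))⁻¹ * (q ^ (((m : ℝ) + 1) * x) / ((m : ℝ) + 1)) = A q x m := by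
      rw [A, mul_comm ((1 - q ^ (m + 1))⁻¹), ← div_eq_mul_inv, div_div, mul_comm ((m : ℝ) + 1)]
    have h2 := h.congr_fun heq
    rwa [hval] at h2
  have hlog_eq : ∀ i : ℕ, Real.log (1 - q ^ (x + (i : ℝ))) = -∑' m, F2 q x (i, m) := by
    intro i
    have h := (hrow i).tsum_eq
    linarith
  have hsum_log : Summable fun i : ℕ => Real.log (1 - q ^ (x + (i : ℝ))) := by
    refine (hsumF2.prod.neg).congr fun i => (hlog_eq i).symm
  have hts : ∑' i : ℕ, Real.log (1 - q ^ (x + (i : ℝ))) = -∑' m, A q x m := by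
    calc ∑' i : ℕ, Real.log (1 - q ^ (x + (i : ℝ)))
        = ∑' i : ℕ, -(∑' m, F2 q x (i, m)) := tsum_congr hlog_eq
      _ = -∑' i : ℕ, ∑' m, F2 q x (i, m) := tsum_neg
      _ = -∑' m, ∑' i : ℕ, F2 q x (i, m) := by
          have hunc : Summable (Function.uncurry fun i m : ℕ => F2 q x (i, m)) :=
            hsumF2.congr fun p => rfl
          rw [Summable.tsum_comm' hunc (fun i => (hrow i).summable) (fun m => (hcol m).summable)]
      _ = -∑' m, A q x m := by
          congr 1
          exact tsum_congr fun m => (hcol m).tsum_eq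
  have := hsum_log.hasSum
  rwa [hts] at this

lemma tprod_eq {x : ℝ} (hx : 0 < x) :
    ∏' i : ℕ, (1 - q ^ (x + (i : ℝ))) = Real.exp (-∑' m, A q x m) := by
  have h := (hasSum_log hq0 hq1 hx).rexp
  have hfe : (Real.exp ∘ fun i : ℕ => Real.log (1 - q ^ (x + (i : ℝ))))
      = fun i : ℕ => 1 - q ^ (x + (i : ℝ)) := by
    funext i
    exact Real.exp_log (by
      have := rpow_lt_one' hq0 hq1 (show (0:ℝ) < x + (i : ℝ) by positivity)
      linarith)
  rw [hfe] at h
  exact h.tprod_eq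

lemma log_qGamma {x : ℝ} (hx : 0 < x) :
    Real.log (qGamma q x) = ∑' m, A q x m - ∑' m, A q 1 m + (1 - x) * Real.log (1 - q) := by
  have hq' : 0 < 1 - q := by linarith
  have hnum : ∏' i : ℕ, (1 - q ^ (i + 1)) = Real.exp (-∑' m, A q 1 m) := by
    rw [← tprod_eq hq0 hq1 one_pos]
    exact tprod_congr fun i => by
      rw [show (1 : ℝ) + (i : ℝ) = ((i + 1 : ℕ) : ℝ) by push_cast; ring, Real.rpow_natCast]
  rw [qGamma, hnum, tprod_eq hq0 hq1 hx, ← Real.exp_sub,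
    Real.log_mul (Real.exp_ne_zero _) (Real.rpow_pos_of_pos hq' _).ne',
    Real.log_exp, Real.log_rpow hq']
  ring

lemma g_eq {x : ℝ} (hx : 0 < x) :
    Real.log (qGamma q x) - x * qDigamma q x
      = (∑' m, Fm q x m) + (Real.log (1 - q) - ∑' m, A q 1 m) := by
  have hFm : ∑' m, Fm q x m = ∑' m, A q x m - x * Real.log q * ∑' m, B q x m := by
    rw [tsum_congr (Fm_eq hq0 hq1 x), Summable.tsum_sub (summable_A hq0 hq1 hx)
      (((summable_B hq0 hq1 hx).mul_left _)), tsum_mul_left]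
  have hB : (∑' n : ℕ, q ^ (((n : ℝ) + 1) * x) / (1 - q ^ (n + 1))) = ∑' m, B q x m := rfl
  rw [log_qGamma hq0 hq1 hx, qDigamma, hB, hFm]
  ring

end

lemma phi_lt {u v : ℝ} (h : u < v) (hv : v ≤ 0) :
    Real.exp u * (1 - u) < Real.exp v * (1 - v) := by
  have ht : 0 < v - u := by linarith
  have hexp : v - u + 1 < Real.exp (v - u) := Real.add_one_lt_exp ht.ne'
  have h1 : Real.exp u = Real.exp v / Real.exp (v - u) := by
    rw [← Real.exp_sub]; ring_nf
  have hev : 0 < Real.exp v := Real.exp_pos v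
  have h2 : (1 - u) < (1 - v) * Real.exp (v - u) := by
    nlinarith [mul_lt_mul_of_pos_left hexp (show (0:ℝ) < 1 - v by linarith),
      mul_nonneg (neg_nonneg.2 hv) ht.le]
  rw [h1, div_mul_eq_mul_div, div_lt_iff₀ (Real.exp_pos _)]
  calc Real.exp v * (1 - u) < Real.exp v * ((1 - v) * Real.exp (v - u)) :=
        (mul_lt_mul_iff_right₀ hev).2 h2
    _ = Real.exp v * (1 - v) * Real.exp (v - u) := by ring

section
variable (hq0 : 0 < q) (hq1 : q < 1)
include hq0 hq1

lemma Fm_exp (x : ℝ) (m : ℕ) :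
    Fm q x m = Real.exp (((m : ℝ) + 1) * x * Real.log q)
      * (1 - ((m : ℝ) + 1) * x * Real.log q) / (((m : ℝ) + 1) * (1 - q ^ (m + 1))) := by
  have h1 := (one_sub_pow_pos hq0 hq1 m).ne'
  have hK : ((m : ℝ) + 1) ≠ 0 := by positivity
  rw [Fm, Real.rpow_def_of_pos hq0]
  rw [show Real.log q * (((m : ℝ) + 1) * x) = ((m : ℝ) + 1) * x * Real.log q by ring]
  field_simp

lemma Fm_anti {x y : ℝ} (hx : 0 < x) (hxy : x < y) (m : ℕ) : Fm q y m < Fm q x m := by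
  have hL : Real.log q < 0 := Real.log_neg hq0 hq1
  have h1 := one_sub_pow_pos hq0 hq1 m
  have hK : (0:ℝ) < (m : ℝ) + 1 := by positivity
  rw [Fm_exp hq0 hq1, Fm_exp hq0 hq1]
  refine (div_lt_div_iff_of_pos_right (by positivity)).2 ?_
  exact phi_lt
    (by nlinarith [mul_pos (mul_pos hK (sub_pos.2 hxy)) (neg_pos.2 hL)])
    (by nlinarith [mul_pos (mul_pos hK hx) (neg_pos.2 hL)])

lemma strictAnti_g : StrictAntiOn
    (fun x => Real.log (qGamma q x) - x * qDigamma q x) (Set.Ioi 0) := by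
  intro x hx y hy hxy
  simp only [Set.mem_Ioi] at hx hy
  show Real.log (qGamma q y) - y * qDigamma q y < Real.log (qGamma q x) - x * qDigamma q x
  rw [g_eq hq0 hq1 hx, g_eq hq0 hq1 hy]
  have h := Summable.tsum_lt_tsum (f := Fm q y) (g := Fm q x)
    (fun m => (Fm_anti hq0 hq1 hx hxy m).le) (Fm_anti hq0 hq1 hx hxy 0)
    (summable_Fm hq0 hq1 (hx.trans hxy)) (summable_Fm hq0 hq1 hx)
  linarith

/-- terms of the series for `-log(1-q)`. -/
noncomputable def D (q : ℝ) (m : ℕ) : ℝ := q ^ (m + 1) / ((m : ℝ) + 1)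

lemma hasSum_D : HasSum (D q) (-Real.log (1 - q)) := by
  have h := Real.hasSum_pow_div_log_of_abs_lt_one
    (x := q) (by rw [abs_of_pos hq0]; exact hq1)
  exact h.congr_fun fun m => by simp [D]

lemma q_rpow_one (m : ℕ) : q ^ (((m : ℝ) + 1) * 1) = q ^ (m + 1) := by
  rw [mul_one, show ((m : ℝ) + 1) = ((m + 1 : ℕ) : ℝ) by push_cast; ring, Real.rpow_natCast]

lemma g_one_pos : 0 < Real.log (qGamma q 1) - 1 * qDigamma q 1 := by
  have hq' : 0 < 1 - q := by linarith
  have hL : Real.log q < 0 := Real.log_neg hq0 hq1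
  rw [g_eq hq0 hq1 one_pos]
  have hlog : Real.log (1 - q) = -∑' m, D q m := by
    have h := (hasSum_D hq0 hq1).tsum_eq
    linarith
  rw [hlog]
  have hsum : ∑' m, Fm q 1 m + (-∑' m, D q m - ∑' m, A q 1 m)
      = ∑' m, (Fm q 1 m - D q m - A q 1 m) := by
    rw [Summable.tsum_sub ((summable_Fm hq0 hq1 one_pos).sub (hasSum_D hq0 hq1).summable)
      (summable_A hq0 hq1 one_pos),
      Summable.tsum_sub (summable_Fm hq0 hq1 one_pos) (hasSum_D hq0 hq1).summable]
    ring
  rw [hsum]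
  have hpos : ∀ m : ℕ, 0 < Fm q 1 m - D q m - A q 1 m := by
    intro m
    have h1 := one_sub_pow_pos hq0 hq1 m
    have hK : (0:ℝ) < (m : ℝ) + 1 := by positivity
    have hy0 : (0:ℝ) < q ^ (m + 1) := by positivity
    have hylog : Real.log (q ^ (m + 1)) < q ^ (m + 1) - 1 :=
      Real.log_lt_sub_one_of_pos hy0 (pow_lt_one₀ hq0.le hq1 m.succ_ne_zero).ne
    rw [Real.log_pow] at hylog
    push_cast at hylog
    have key : Fm q 1 m - D q m - A q 1 m
        = q ^ (m + 1) * ((-Real.log q) * ((m : ℝ) + 1) - (1 - q ^ (m + 1)))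
          / (((m : ℝ) + 1) * (1 - q ^ (m + 1))) := by
      rw [Fm, D, A, q_rpow_one hq0 hq1]
      field_simp
      ring
    rw [key]
    apply div_pos ?_ (by positivity)
    apply mul_pos hy0
    nlinarith
  have hsm : Summable fun m => Fm q 1 m - D q m - A q 1 m :=
    ((summable_Fm hq0 hq1 one_pos).sub (hasSum_D hq0 hq1).summable).sub
      (summable_A hq0 hq1 one_pos)
  exact Summable.tsum_pos hsm (fun m => (hpos m).le) 0 (hpos 0)

lemma q_rpow_two (m : ℕ) : q ^ (((m : ℝ) + 1) * 2) = (q ^ (m + 1)) ^ 2 := by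
  rw [show ((m : ℝ) + 1) * 2 = (((m + 1) * 2 : ℕ) : ℝ) by push_cast; ring,
    Real.rpow_natCast, pow_mul]

lemma g_two_neg : Real.log (qGamma q 2) - 2 * qDigamma q 2 < 0 := by
  have hq' : 0 < 1 - q := by linarith
  have hL : Real.log q < 0 := Real.log_neg hq0 hq1
  rw [g_eq hq0 hq1 two_pos]
  have hlog : Real.log (1 - q) = -∑' m, D q m := by
    have h := (hasSum_D hq0 hq1).tsum_eq
    linarith
  rw [hlog]
  have hsum : ∑' m, Fm q 2 m + (-∑' m, D q m - ∑' m, A q 1 m)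
      = ∑' m, (Fm q 2 m - D q m - A q 1 m) := by
    rw [Summable.tsum_sub ((summable_Fm hq0 hq1 two_pos).sub (hasSum_D hq0 hq1).summable)
      (summable_A hq0 hq1 one_pos),
      Summable.tsum_sub (summable_Fm hq0 hq1 two_pos) (hasSum_D hq0 hq1).summable]
    ring
  rw [hsum]
  have hneg : ∀ m : ℕ, Fm q 2 m - D q m - A q 1 m < 0 := by
    intro m
    have h1 := one_sub_pow_pos hq0 hq1 m
    have hK : (0:ℝ) < (m : ℝ) + 1 := by positivity
    have hy0 : (0:ℝ) < q ^ (m + 1) := by positivity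
    have hy1 : q ^ (m + 1) < 1 := pow_lt_one₀ hq0.le hq1 m.succ_ne_zero
    have hylog : Real.log (q ^ (m + 1))⁻¹ < (q ^ (m + 1))⁻¹ - 1 :=
      Real.log_lt_sub_one_of_pos (by positivity) (by
        intro h
        rw [inv_eq_one] at h
        exact hy1.ne h)
    rw [Real.log_inv, Real.log_pow] at hylog
    push_cast at hylog
    -- from hylog : -(K * log q) < y⁻¹ - 1, derive y - y * K * log q - 1 < 0
    have hcore : q ^ (m + 1) - q ^ (m + 1) * (((m : ℝ) + 1) * Real.log q) - 1 < 0 := by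
      have := mul_lt_mul_of_pos_left hylog hy0
      rw [mul_sub, mul_inv_cancel₀ hy0.ne'] at this
      nlinarith
    have key : Fm q 2 m - D q m - A q 1 m
        = 2 * q ^ (m + 1) * (q ^ (m + 1) - q ^ (m + 1) * (((m : ℝ) + 1) * Real.log q) - 1)
          / (((m : ℝ) + 1) * (1 - q ^ (m + 1))) := by
      rw [Fm, D, A, q_rpow_one hq0 hq1, q_rpow_two hq0 hq1]
      field_simp
      ring
    rw [key]
    apply div_neg_of_neg_of_pos ?_ (by positivity)
    nlinarith
  have hsm : Summable fun m => Fm q 2 m - D q m - A q 1 m :=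
    ((summable_Fm hq0 hq1 two_pos).sub (hasSum_D hq0 hq1).summable).sub
      (summable_A hq0 hq1 one_pos)
  have h := Summable.tsum_pos (g := fun m => -(Fm q 2 m - D q m - A q 1 m)) hsm.neg
    (fun m => neg_nonneg.2 (hneg m).le) 0 (neg_pos.2 (hneg 0))
  rw [tsum_neg] at h
  linarith

lemma contOn_g : ContinuousOn
    (fun x => Real.log (qGamma q x) - x * qDigamma q x) (Set.Icc 1 2) := by
  have hq' : 0 < 1 - q := by linarith
  have hL : Real.log q < 0 := Real.log_neg hq0 hq1
  have hF : ContinuousOn (fun x => ∑' m, Fm q x m) (Set.Icc 1 2) := by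
    refine continuousOn_tsum (u := fun m => q ^ (m + 1) * ((1 - 2 * Real.log q) / (1 - q)))
      (fun m => ?_) (summable_shift q _ hq0.le hq1) (fun m x hx => ?_)
    · have : ContinuousOn (fun x : ℝ => Fm q x m) (Set.Icc 1 2) := by
        have : (fun x : ℝ => Fm q x m) = fun x =>
            Real.exp (Real.log q * (((m : ℝ) + 1) * x)) * (1 / ((m : ℝ) + 1) - x * Real.log q)
              / (1 - q ^ (m + 1)) := by
          funext x
          rw [Fm, Real.rpow_def_of_pos hq0]
        rw [this]
        fun_prop
      exact this
    · obtain ⟨hx1, hx2⟩ := hx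
      have hxpos : (0:ℝ) < x := by linarith
      have h1 := one_sub_pow_pos hq0 hq1 m
      have hK : (0:ℝ) < (m : ℝ) + 1 := by positivity
      rw [Real.norm_eq_abs, abs_of_nonneg (Fm_nonneg hq0 hq1 hxpos m)]
      show Fm q x m ≤ q ^ (m + 1) * ((1 - 2 * Real.log q) / (1 - q))
      have hb1 : q ^ (((m : ℝ) + 1) * x) ≤ q ^ (m + 1) := by
        rw [← q_rpow_one hq0 hq1]
        exact Real.rpow_le_rpow_of_exponent_ge hq0 hq1.le (by nlinarith)
      have hb2 : 1 / ((m : ℝ) + 1) - x * Real.log q ≤ 1 - 2 * Real.log q := by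
        have h1K : 1 / ((m : ℝ) + 1) ≤ 1 := by
          rw [div_le_one hK]; linarith [Nat.cast_nonneg (α := ℝ) m]
        nlinarith
      have hb3 : 1 - q ≤ 1 - q ^ (m + 1) := by linarith [pow_le_q hq0 hq1 m]
      have hfn : 0 ≤ 1 / ((m : ℝ) + 1) - x * Real.log q := by
        have : 0 < 1 / ((m : ℝ) + 1) := by positivity
        nlinarith
      have h2L : (0:ℝ) < 1 - 2 * Real.log q := by nlinarith
      rw [Fm, show q ^ (m + 1) * ((1 - 2 * Real.log q) / (1 - q))
          = q ^ (m + 1) * (1 - 2 * Real.log q) / (1 - q) by ring]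
      exact div_le_div₀ (mul_nonneg (by positivity) h2L.le)
        (mul_le_mul hb1 hb2 hfn (by positivity)) hq' hb3
  have heq : Set.EqOn (fun x => Real.log (qGamma q x) - x * qDigamma q x)
      (fun x => (∑' m, Fm q x m) + (Real.log (1 - q) - ∑' m, A q 1 m)) (Set.Icc 1 2) := by
    intro x hx
    exact g_eq hq0 hq1 (by linarith [hx.1])
  exact (hF.add continuousOn_const).congr heq

end

end QGaux

/-- g(x) = log Γ_q(x) - x ψ_q(x) is strictly decreasing on (0,∞) with a
unique zero, which lies in (1,2). -/
theorem log_qGamma_sub_mul_qDigamma_strictAnti (q : ℝ) (hq0 : 0 < q) (hq1 : q < 1) :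
    StrictAntiOn (fun x => Real.log (qGamma q x) - x * qDigamma q x) (Set.Ioi 0) ∧
    ∃ x₀ ∈ Set.Ioo (1 : ℝ) 2,
      Real.log (qGamma q x₀) - x₀ * qDigamma q x₀ = 0 ∧
      ∀ x ∈ Set.Ioi (0 : ℝ), Real.log (qGamma q x) - x * qDigamma q x = 0 → x = x₀ := by
  set g : ℝ → ℝ := fun x => Real.log (qGamma q x) - x * qDigamma q x with hg
  have hanti : StrictAntiOn g (Set.Ioi 0) := QGaux.strictAnti_g hq0 hq1
  refine ⟨hanti, ?_⟩
  have h1 : 0 < g 1 := by simpa [hg] using QGaux.g_one_pos hq0 hq1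
  have h2 : g 2 < 0 := QGaux.g_two_neg hq0 hq1
  have hcont : ContinuousOn g (Set.Icc 1 2) := QGaux.contOn_g hq0 hq1
  have hmem : (0 : ℝ) ∈ Set.Ioo (g 2) (g 1) := ⟨h2, h1⟩
  obtain ⟨x₀, hx₀, hgx₀⟩ := intermediate_value_Ioo' one_le_two hcont hmem
  refine ⟨x₀, hx₀, hgx₀, ?_⟩
  intro x hx hgx
  have hx₀' : x₀ ∈ Set.Ioi (0 : ℝ) := Set.mem_Ioi.2 (by linarith [hx₀.1])
  exact hanti.injOn hx hx₀' (hgx.trans hgx₀.symm)
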